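/- arXiv:1608.03419 — 5 statements merged into one kernel-verified Lean document; each statement's English description precedes it below -/
import Mathlib

section
/- For the 3-Kronecker quiver and dimension vector (d, d+1), the general cover-thin tree module counting formula (1/d)·∑_{i=1}^{m} C(m,i)·C(ne, d-1)·C(n(d-1), e-i)·(i/e) with m=3, n=2, e=d+1 simplifies to ct_{(d,d+1)} = (3/((d+2)(d+3)))·C(2d, d)·C(2(d+1), d+1). That is, for every positive integer d, (1/d)·∑_{i=1}^{3} C(3,i)·C(2(d+1), d-1)·C(2(d-1), d+1-i)·(i/(d+1)) = (3/((d+2)(d+3)))·C(2d,d)·C(2d+2, d+1). -/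
noncomputable def intChoose (a b : ℤ) : ℚ :=
  if 0 ≤ b ∧ b ≤ a then ((a.toNat.choose b.toNat : ℕ) : ℚ) else 0

lemma ic_eq (a b : ℤ) (A B : ℕ) (ha : a = A) (hb : b = B) (h : B ≤ A) :
    intChoose a b = (A.choose B : ℚ) := by
  subst ha hb
  have : (0:ℤ) ≤ (B:ℤ) ∧ (B:ℤ) ≤ (A:ℤ) := ⟨by positivity, by exact_mod_cast h⟩
  simp [intChoose, this]

open Nat
lemma cc (A B C : ℕ) (h : B ≤ A) (hc : A - B = C) : ((A.choose B : ℕ) : ℚ) = A ! / (B ! * C !) := by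
  subst hc; exact Nat.cast_choose ℚ h

/-- For the 3-Kronecker quiver and dimension vector `(d, d+1)` the general
cover-thin tree-module counting formula simplifies to
`ct_{(d,d+1)} = 3/((d+2)(d+3)) · C(2d,d) · C(2d+2,d+1)`. -/
theorem stmt0 (d : ℤ) (hd : 1 ≤ d) :
    (1 / (d : ℚ)) *
        ∑ i ∈ Finset.Icc (1 : ℤ) 3,
          intChoose 3 i * intChoose (2 * (d + 1)) (d - 1) *
            intChoose (2 * (d - 1)) (d + 1 - i) * ((i : ℚ) / ((d : ℚ) + 1))
      = (3 / (((d : ℚ) + 2) * ((d : ℚ) + 3))) *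
          intChoose (2 * d) d * intChoose (2 * d + 2) (d + 1) := by
  rw [show Finset.Icc (1:ℤ) 3 = {1,2,3} from by decide]
  rw [show ({1,2,3} : Finset ℤ) = insert 1 (insert 2 {3}) from rfl]
  rw [Finset.sum_insert (by decide), Finset.sum_insert (by decide), Finset.sum_singleton]
  rcases eq_or_lt_of_le hd with h1 | h2
  · -- d = 1
    subst h1
    simp only [intChoose]
    norm_num
    simp only [show ((3:ℤ).toNat)=3 from rfl, show ((2:ℤ).toNat)=2 from rfl,
      show ((4:ℤ).toNat)=4 from rfl, show ((1:ℤ).toNat)=1 from rfl, show ((0:ℤ).toNat)=0 from rfl]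
    norm_num [Nat.choose]
  · obtain ⟨n, rfl⟩ : ∃ n : ℕ, d = (n:ℤ) + 2 := ⟨(d-2).toNat, by omega⟩
    rw [ic_eq 3 1 3 1 (by norm_num) (by norm_num) (by norm_num),
        ic_eq 3 2 3 2 (by norm_num) (by norm_num) (by norm_num),
        ic_eq 3 3 3 3 (by norm_num) (by norm_num) (by norm_num),
        ic_eq (2*(((n:ℤ)+2)+1)) (((n:ℤ)+2)-1) (2*n+6) (n+1)
          (by push_cast; ring) (by push_cast; ring) (by omega),
        ic_eq (2*(((n:ℤ)+2)-1)) (((n:ℤ)+2)+1-1) (2*n+2) (n+2)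
          (by push_cast; ring) (by push_cast; ring) (by omega),
        ic_eq (2*(((n:ℤ)+2)-1)) (((n:ℤ)+2)+1-2) (2*n+2) (n+1)
          (by push_cast; ring) (by push_cast; ring) (by omega),
        ic_eq (2*(((n:ℤ)+2)-1)) (((n:ℤ)+2)+1-3) (2*n+2) n
          (by push_cast; ring) (by push_cast; ring) (by omega),
        ic_eq (2*((n:ℤ)+2)) ((n:ℤ)+2) (2*n+4) (n+2)
          (by push_cast; ring) (by push_cast; ring) (by omega),
        ic_eq (2*((n:ℤ)+2)+2) (((n:ℤ)+2)+1) (2*n+6) (n+3)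
          (by push_cast; ring) (by push_cast; ring) (by omega)]
    rw [cc (2*n+6) (n+1) (n+5) (by omega) (by omega),
        cc (2*n+2) (n+2) n (by omega) (by omega),
        cc (2*n+2) (n+1) (n+1) (by omega) (by omega),
        cc (2*n+2) n (n+2) (by omega) (by omega),
        cc (2*n+4) (n+2) (n+2) (by omega) (by omega),
        cc (2*n+6) (n+3) (n+3) (by omega) (by omega)]
    have h24 : (2*n+4)! = (2*n+4)*((2*n+3)*(2*n+2)!) := by
      rw [show 2*n+4 = (2*n+3)+1 from rfl, Nat.factorial_succ,
          show 2*n+3 = (2*n+2)+1 from rfl, Nat.factorial_succ]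
    have h26 : (2*n+6)! = (2*n+6)*((2*n+5)*((2*n+4)*((2*n+3)*(2*n+2)!))) := by
      rw [show 2*n+6 = (2*n+5)+1 from rfl, Nat.factorial_succ,
          show 2*n+5 = (2*n+4)+1 from rfl, Nat.factorial_succ, h24]
    have f1 : (n+1)! = (n+1)*n ! := Nat.factorial_succ n
    have f2 : (n+2)! = (n+2)*((n+1)*n !) := by rw [Nat.factorial_succ, f1]
    have f3 : (n+3)! = (n+3)*((n+2)*((n+1)*n !)) := by rw [Nat.factorial_succ, f2]
    have f4 : (n+4)! = (n+4)*((n+3)*((n+2)*((n+1)*n !))) := by rw [Nat.factorial_succ, f3]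
    have f5 : (n+5)! = (n+5)*((n+4)*((n+3)*((n+2)*((n+1)*n !)))) := by rw [Nat.factorial_succ, f4]
    have hN : ((n ! : ℕ) : ℚ) ≠ 0 := by exact_mod_cast (Nat.factorial_pos n).ne'
    have hM : (((2*n+2)! : ℕ) : ℚ) ≠ 0 := by exact_mod_cast (Nat.factorial_pos (2*n+2)).ne'
    push_cast [h26, h24, f5, f4, f3, f2, f1, show Nat.choose 3 1 = 3 from rfl,
      show Nat.choose 3 2 = 3 from rfl, show Nat.choose 3 3 = 1 from rfl]
    have hn0 : (0:ℚ) < (n:ℚ) + 1 := by positivity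
    field_simp
    ring
end

section
/- For all integers d ≥ 1, the quantity (3/((d+2)(d+3)))·C(2d,d)·C(2d+2,d+1) is a positive integer. -/
lemma dvd3_aux (d : ℕ) : (d + 3) ∣ 6 * Nat.choose (2 * d + 2) (d + 1) := by
  have h1 : Nat.choose (2 * d + 2) (d + 3) * (d + 3)
      = Nat.choose (2 * d + 2) (d + 2) * d := by
    have h := Nat.choose_succ_right_eq (2 * d + 2) (d + 2)
    have e1 : 2 * d + 2 - (d + 2) = d := by omega
    have e2 : d + 2 + 1 = d + 3 := by omega
    rw [e1, e2] at h
    exact h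
  have h2 : Nat.choose (2 * d + 2) (d + 2) * (d + 2)
      = Nat.choose (2 * d + 2) (d + 1) * (d + 1) := by
    have h := Nat.choose_succ_right_eq (2 * d + 2) (d + 1)
    have e1 : 2 * d + 2 - (d + 1) = d + 1 := by omega
    have e2 : d + 1 + 1 = d + 2 := by omega
    rw [e1, e2] at h
    exact h
  haveI : NeZero (d + 3) := ⟨by omega⟩
  rw [← ZMod.natCast_eq_zero_iff]
  have hd3 : ((d : ZMod (d + 3)) + 3) = 0 := by
    have h : ((d + 3 : ℕ) : ZMod (d + 3)) = 0 := ZMod.natCast_self _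
    push_cast at h
    exact h
  have hd : (d : ZMod (d + 3)) = -3 := by linear_combination hd3
  have h1' : (Nat.choose (2 * d + 2) (d + 3) : ZMod (d + 3)) * ((d : ZMod (d + 3)) + 3)
      = (Nat.choose (2 * d + 2) (d + 2) : ZMod (d + 3)) * (d : ZMod (d + 3)) := by
    have := congrArg (Nat.cast : ℕ → ZMod (d + 3)) h1
    push_cast at this
    exact_mod_cast this
  have h2' : (Nat.choose (2 * d + 2) (d + 2) : ZMod (d + 3)) * ((d : ZMod (d + 3)) + 2)
      = (Nat.choose (2 * d + 2) (d + 1) : ZMod (d + 3)) * ((d : ZMod (d + 3)) + 1) := by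
    have := congrArg (Nat.cast : ℕ → ZMod (d + 3)) h2
    push_cast at this
    exact_mod_cast this
  rw [hd] at h1' h2'
  push_cast
  linear_combination h1' + 3 * h2'

lemma even_central (e : ℕ) :
    Nat.choose (2 * (e + 1)) (e + 1) = 2 * Nat.choose (2 * e + 1) e := by
  have h1 : 2 * (e + 1) = (2 * e + 1) + 1 := by ring
  rw [h1, Nat.choose_succ_succ]
  have h2 : Nat.choose (2 * e + 1) (e + 1) = Nat.choose (2 * e + 1) e := by
    have h := Nat.choose_symm (n := 2 * e + 1) (k := e + 1) (by omega)
    simpa [show 2 * e + 1 - (e + 1) = e by omega] using h.symm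
  simp only [Nat.succ_eq_add_one, h2]
  omega

/-- `(3/((d+2)(d+3))) · C(2d,d) · C(2d+2,d+1)` is a positive integer for every `d ≥ 1`. -/
theorem stmt1 (d : ℕ) (hd : 1 ≤ d) :
    ∃ k : ℕ, 0 < k ∧
      ((3 : ℚ) / (((d : ℚ) + 2) * ((d : ℚ) + 3))) *
          ((Nat.choose (2 * d) d : ℕ) : ℚ) * ((Nat.choose (2 * d + 2) (d + 1) : ℕ) : ℚ)
        = (k : ℚ) := by
  set A := Nat.choose (2 * d) d with hA
  set B := Nat.choose (2 * d + 2) (d + 1) with hB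
  have heven : ∃ A', A = 2 * A' := by
    obtain ⟨e, rfl⟩ : ∃ e, d = e + 1 := ⟨d - 1, by omega⟩
    exact ⟨Nat.choose (2 * e + 1) e, by rw [hA]; exact even_central e⟩
  obtain ⟨A', hA'⟩ := heven
  have hdvd2 : (d + 2) ∣ B := by
    have h := Nat.succ_dvd_centralBinom (d + 1)
    simpa [hB, Nat.centralBinom, show 2 * (d + 1) = 2 * d + 2 by ring] using h
  have hdvd3 : (d + 3) ∣ 3 * A * B := by
    obtain ⟨t, ht⟩ := dvd3_aux d
    rw [← hB] at ht
    exact ⟨A' * t, by rw [hA']; calc 3 * (2 * A') * B = A' * (6 * B) := by ring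
      _ = A' * ((d + 3) * t) := by rw [ht]
      _ = (d + 3) * (A' * t) := by ring⟩
  have hcop : Nat.Coprime (d + 2) (d + 3) := by
    have h : d + 3 = (d + 2) + 1 := by omega
    rw [h, Nat.coprime_self_add_right]
    exact Nat.coprime_one_right _
  have hN : (d + 2) * (d + 3) ∣ 3 * A * B :=
    hcop.mul_dvd_of_dvd_of_dvd (Dvd.dvd.mul_left hdvd2 (3 * A)) hdvd3
  obtain ⟨k, hk⟩ := hN
  have hApos : 0 < A := Nat.choose_pos (by omega)
  have hBpos : 0 < B := Nat.choose_pos (by omega)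
  have hkpos : 0 < k := by
    rcases Nat.eq_zero_or_pos k with h | h
    · rw [h, Nat.mul_zero] at hk; nlinarith
    · exact h
  refine ⟨k, hkpos, ?_⟩
  have hq : (3 * A * B : ℚ) = ((d : ℚ) + 2) * ((d : ℚ) + 3) * k := by
    exact_mod_cast congrArg (Nat.cast : ℕ → ℚ) hk
  have h2 : ((d : ℚ) + 2) ≠ 0 := by positivity
  have h3 : ((d : ℚ) + 3) ≠ 0 := by positivity
  field_simp
  linear_combination hq
end

section
/- Let k, n be real numbers with 1 ≤ k < n. Then the limit as d → ∞ of (1/d)·ln( C(n k d, d)·C(n d, k d) ) equals n(k+1)·ln n + k(n-1)·ln k − (nk−1)·ln(nk−1) − (n−k)·ln(n−k), where the binomial-type expressions are interpreted via the Gamma function: C(x,y) = Γ(x+1)/(Γ(y+1)Γ(x−y+1)). -/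
open Real Filter

/-- Generalized binomial coefficient via the Gamma function:
`C(x,y) = Γ(x+1)/(Γ(y+1)Γ(x−y+1))`. -/
noncomputable def gammaChoose (x y : ℝ) : ℝ :=
  Real.Gamma (x + 1) / (Real.Gamma (y + 1) * Real.Gamma (x - y + 1))


private lemma stmt5aux_psi_monotone : MonotoneOn (fun t : ℝ => t * Real.log t - t) (Set.Ici 1) := by
  have hd : ∀ t : ℝ, 1 < t → HasDerivAt (fun t : ℝ => t * Real.log t - t) (Real.log t) t := by
    intro t ht
    have := (Real.hasDerivAt_mul_log (by linarith : t ≠ 0)).sub (hasDerivAt_id t)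
    simp at this; exact this
  apply monotoneOn_of_deriv_nonneg (convex_Ici 1)
  · apply ContinuousOn.sub (ContinuousOn.mul continuousOn_id ?_) continuousOn_id
    exact Real.continuousOn_log.mono (by intro x hx h0; simp at hx h0; linarith)
  · rw [interior_Ici]
    intro t ht
    exact (hd t ht).differentiableAt.differentiableWithinAt
  · rw [interior_Ici]
    intro t ht
    rw [(hd t ht).deriv]
    exact Real.log_nonneg ht.le

private lemma stmt5aux_psi_diff {x : ℝ} (hx : 1 ≤ x) :
    ((x+1) * Real.log (x+1) - (x+1)) - (x * Real.log x - x) ≤ Real.log (x+1) + 1 := by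
  have hx0 : (0:ℝ) < x := by linarith
  have h1 : Real.log (x+1) - Real.log x ≤ 1/x := by
    rw [← Real.log_div (by linarith) (ne_of_gt hx0)]
    have h := Real.log_le_sub_one_of_pos (show (0:ℝ) < (x+1)/x by positivity)
    have : (x+1)/x - 1 = 1/x := by field_simp; ring
    linarith
  have h2 : x * (1/x) = 1 := by field_simp
  nlinarith [mul_le_mul_of_nonneg_left h1 hx0.le]

private lemma stmt5aux_logfac_bound : ∃ B : ℝ, ∀ m : ℕ, 1 ≤ m →
    |Real.log (Nat.factorial m) - ((m:ℝ) * Real.log m - m)| ≤ B + Real.log (2*m) := by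
  have h : Tendsto (fun m => |Real.log (Stirling.stirlingSeq m)|) atTop
      (nhds |Real.log (Real.sqrt π)|) :=
    (((Real.continuousAt_log (by positivity)).tendsto).comp
      Stirling.tendsto_stirlingSeq_sqrt_pi).abs
  obtain ⟨B, hB⟩ := h.bddAbove_range
  refine ⟨B, fun m hm => ?_⟩
  have hm1 : (1:ℝ) ≤ m := by exact_mod_cast hm
  have hm0 : (0:ℝ) < m := by linarith
  have hfacpos : (0:ℝ) < m.factorial := by exact_mod_cast m.factorial_pos
  have hlog : Real.log (Stirling.stirlingSeq m)
      = Real.log m.factorial - (1/2 * Real.log (2*m) + ((m:ℝ) * Real.log m - m)) := by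
    rw [Stirling.stirlingSeq, Real.log_div hfacpos.ne' (by positivity),
      Real.log_mul (by positivity) (by positivity), Real.log_sqrt (by positivity),
      Real.log_pow, Real.log_div hm0.ne' (Real.exp_ne_zero 1), Real.log_exp]
    ring
  have hBm : |Real.log (Stirling.stirlingSeq m)| ≤ B := hB ⟨m, rfl⟩
  have hlognn : 0 ≤ Real.log (2*m) := Real.log_nonneg (by linarith)
  rw [abs_le] at hBm ⊢
  constructor
  · linarith [hBm.1, hlognn, hlog]
  · linarith [hBm.2, hlognn, hlog]

private lemma stmt5aux_log_div_tendsto (a b : ℝ) (ha : 0 < a) :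
    Tendsto (fun d : ℕ => Real.log (a * d + b) / d) atTop (nhds 0) := by
  have h1 : Tendsto (fun d : ℕ => a * (d:ℝ) + b) atTop atTop :=
    tendsto_atTop_add_const_right _ b
      (tendsto_natCast_atTop_atTop.const_mul_atTop ha)
  have h2 : Tendsto (fun d : ℕ => Real.log (a*d+b) / (a*d+b)) atTop (nhds 0) :=
    (Real.isLittleO_log_id_atTop.tendsto_div_nhds_zero).comp h1
  have h3 : Tendsto (fun d : ℕ => (a*(d:ℝ)+b) / d) atTop (nhds a) := by
    have : Tendsto (fun d : ℕ => a + b / (d:ℝ)) atTop (nhds (a + 0)) :=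
      tendsto_const_nhds.add (tendsto_const_div_atTop_nhds_zero_nat b)
    rw [add_zero] at this
    apply this.congr'
    filter_upwards [eventually_ge_atTop 1] with d hd
    have : (d:ℝ) ≠ 0 := by positivity
    field_simp
  have h4 := h2.mul h3
  rw [zero_mul] at h4
  apply h4.congr'
  filter_upwards [h1.eventually_ge_atTop 1] with d hd
  have hX : a*(d:ℝ)+b ≠ 0 := by linarith
  rw [div_mul_div_comm, mul_comm (Real.log (a*↑d+b)) (a*↑d+b), mul_div_mul_left _ _ hX]

private lemma stmt5aux_key (a : ℝ) (ha : 0 < a) :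
    Tendsto (fun d : ℕ =>
      (Real.log (Real.Gamma (a*d+1)) - (a*d*Real.log (a*d) - a*d)) / d) atTop (nhds 0) := by
  obtain ⟨B, hB⟩ := stmt5aux_logfac_bound
  apply squeeze_zero_norm'
    (a := fun d : ℕ => (B + 1 + Real.log (a*d+1) + Real.log (2*a*d+2)) / d)
  · filter_upwards [tendsto_natCast_atTop_atTop.eventually_ge_atTop (2/a),
      eventually_ge_atTop 1] with d hda hd1
    set x : ℝ := a * d with hxdef
    have hx2 : 2 ≤ x := by
      have : a * (2/a) ≤ a * d := by
        apply mul_le_mul_of_nonneg_left hda ha.le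
      rwa [mul_div_cancel₀ 2 ha.ne'] at this
    have hx1 : (1:ℝ) ≤ x := by linarith
    set m : ℕ := ⌈x⌉₊ with hmdef
    have hm_ge : x ≤ (m:ℝ) := Nat.le_ceil x
    have hm_le : (m:ℝ) ≤ x + 1 := (Nat.ceil_lt_add_one (by linarith : (0:ℝ) ≤ x)).le
    have hm2 : 2 ≤ m := by exact_mod_cast le_trans hx2 hm_ge
    have hm1 : 1 ≤ m := by omega
    have hcast : ((m-1:ℕ):ℝ) = (m:ℝ) - 1 := by
      push_cast [Nat.cast_sub hm1]; ring
    have mono := Real.Gamma_strictMonoOn_Ici.monotoneOn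
    have hGpos : 0 < Real.Gamma (x+1) := Real.Gamma_pos_of_pos (by linarith)
    have hGm1 : Real.Gamma ((m:ℝ)+1) = m.factorial := Real.Gamma_nat_eq_factorial m
    have hGm : Real.Gamma (m:ℝ) = (m-1).factorial := by
      rw [show (m:ℝ) = ((m-1:ℕ):ℝ) + 1 by rw [hcast]; ring]
      exact Real.Gamma_nat_eq_factorial (m-1)
    have hm2R : (2:ℝ) ≤ m := by exact_mod_cast hm2
    have hG1 : Real.Gamma (m:ℝ) ≤ Real.Gamma (x+1) :=
      mono (by simpa using hm2R) (by simp; linarith) (by linarith)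
    have hG2 : Real.Gamma (x+1) ≤ Real.Gamma ((m:ℝ)+1) :=
      mono (by simp; linarith) (by simp; linarith) (by linarith)
    have hub : Real.log (Real.Gamma (x+1)) ≤ Real.log m.factorial := by
      rw [← hGm1]; exact Real.log_le_log hGpos hG2
    have hlb : Real.log ((m-1).factorial) ≤ Real.log (Real.Gamma (x+1)) := by
      rw [← hGm]
      exact Real.log_le_log (Real.Gamma_pos_of_pos (by linarith)) hG1
    have hfu := hB m hm1
    have hfl := hB (m-1) (by omega)
    rw [hcast] at hfl
    rw [abs_le] at hfu hfl
    have hψm : (m:ℝ)*Real.log m - m ≤ (x+1)*Real.log (x+1) - (x+1) :=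
      stmt5aux_psi_monotone (by simp; linarith) (by simp; linarith) hm_le
    have hψm1 : (x-1)*Real.log (x-1) - (x-1) ≤ ((m:ℝ)-1)*Real.log ((m:ℝ)-1) - ((m:ℝ)-1) :=
      stmt5aux_psi_monotone (by simp; linarith) (by simp; linarith) (by linarith)
    have hd1' : ((x+1)*Real.log (x+1) - (x+1)) - (x*Real.log x - x) ≤ Real.log (x+1) + 1 :=
      stmt5aux_psi_diff hx1
    have hd2 : (x*Real.log x - x) - ((x-1)*Real.log (x-1) - (x-1)) ≤ Real.log x + 1 := by
      have := stmt5aux_psi_diff (show (1:ℝ) ≤ x - 1 by linarith)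
      simpa using this
    have hlx : Real.log x ≤ Real.log (x+1) := Real.log_le_log (by linarith) (by linarith)
    have hl2m : Real.log (2*(m:ℝ)) ≤ Real.log (2*a*d+2) := by
      apply Real.log_le_log (by linarith)
      linarith
    have hl2m1 : Real.log (2*((m:ℝ)-1)) ≤ Real.log (2*a*d+2) := by
      apply Real.log_le_log (by linarith)
      linarith
    have hxd : Real.log (x+1) = Real.log (a*d+1) := by rw [hxdef]
    have hd0 : (0:ℝ) < d := by exact_mod_cast lt_of_lt_of_le one_pos hd1
    rw [Real.norm_eq_abs, abs_div, abs_of_pos hd0]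
    have hxd1 : a*(d:ℝ)+1 = x+1 := rfl
    rw [hxd1]
    gcongr
    rw [abs_le]
    constructor
    · linarith [hfl.1, hlb, hψm1, hd2, hlx, hl2m1]
    · linarith [hfu.2, hub, hψm, hd1', hl2m]
  · have heq : (fun d : ℕ => (B + 1 + Real.log (a*d+1) + Real.log (2*a*d+2)) / d)
        = fun d : ℕ => (B+1)/d + Real.log (a*d+1)/d + Real.log (2*a*d+2)/d := by
      funext d; rw [add_div, add_div]
    rw [heq]
    have := ((tendsto_const_div_atTop_nhds_zero_nat (B+1)).add
      (stmt5aux_log_div_tendsto a 1 ha)).add (stmt5aux_log_div_tendsto (2*a) 2 (by positivity))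
    simpa using this

/-- Stirling-formula asymptotics of the cover-thin counting binomials along the
ray `(d, kd)` for the `(n+1)`-Kronecker quiver. -/
theorem stmt5 (k n : ℝ) (hk : 1 ≤ k) (hkn : k < n) :
    Tendsto
      (fun d : ℕ =>
        (1 / (d : ℝ)) *
          Real.log (gammaChoose (n * k * d) (d : ℝ) * gammaChoose (n * d) (k * d)))
      atTop
      (nhds (n * (k + 1) * Real.log n + k * (n - 1) * Real.log k -
        (n * k - 1) * Real.log (n * k - 1) - (n - k) * Real.log (n - k))) := by
  have hn1 : (1:ℝ) < n := lt_of_le_of_lt hk hkn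
  have hk0 : (0:ℝ) < k := by linarith
  have hn0 : (0:ℝ) < n := by linarith
  have hnk1 : (0:ℝ) < n*k - 1 := by nlinarith
  have hnk0 : (0:ℝ) < n*k := by positivity
  have hnmk : (0:ℝ) < n - k := by linarith
  have h1 := stmt5aux_key (n*k) hnk0
  have h2 := stmt5aux_key 1 one_pos
  have h3 := stmt5aux_key (n*k-1) hnk1
  have h4 := stmt5aux_key n hn0
  have h5 := stmt5aux_key k hk0
  have h6 := stmt5aux_key (n-k) hnmk
  simp only [one_mul] at h2
  set C := n * (k + 1) * Real.log n + k * (n - 1) * Real.log k -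
        (n * k - 1) * Real.log (n * k - 1) - (n - k) * Real.log (n - k) with hC
  have H := (((((h1.sub h2).sub h3).add h4).sub h5).sub h6).add_const C
  rw [show (0:ℝ)-0-0+0-0-0+C = C by ring] at H
  apply H.congr'
  filter_upwards [eventually_ge_atTop 1] with d hd
  have hd0 : (0:ℝ) < d := by exact_mod_cast Nat.lt_of_lt_of_le Nat.zero_lt_one hd
  simp only [gammaChoose]
  rw [show n*k*(d:ℝ) - d = (n*k-1)*d by ring, show n*(d:ℝ) - k*d = (n-k)*d by ring]
  have p1 : 0 < Real.Gamma (n*k*d+1) := Real.Gamma_pos_of_pos (by positivity)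
  have p2 : 0 < Real.Gamma ((d:ℝ)+1) := Real.Gamma_pos_of_pos (by positivity)
  have p3 : 0 < Real.Gamma ((n*k-1)*d+1) := Real.Gamma_pos_of_pos (by positivity)
  have p4 : 0 < Real.Gamma (n*d+1) := Real.Gamma_pos_of_pos (by positivity)
  have p5 : 0 < Real.Gamma (k*d+1) := Real.Gamma_pos_of_pos (by positivity)
  have p6 : 0 < Real.Gamma ((n-k)*d+1) := Real.Gamma_pos_of_pos (by positivity)
  have q1 : Real.Gamma (n*k*↑d+1) / (Real.Gamma ((d:ℝ)+1)*Real.Gamma ((n*k-1)*↑d+1)) ≠ 0 := by positivity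
  have q2 : Real.Gamma (n*↑d+1) / (Real.Gamma (k*↑d+1)*Real.Gamma ((n-k)*↑d+1)) ≠ 0 := by positivity
  rw [Real.log_mul q1 q2,
      Real.log_div p1.ne' (by positivity), Real.log_div p4.ne' (by positivity),
      Real.log_mul p2.ne' p3.ne', Real.log_mul p5.ne' p6.ne',
      Real.log_mul (ne_of_gt hnk0) hd0.ne', Real.log_mul (ne_of_gt hn0) (ne_of_gt hk0),
      Real.log_mul (ne_of_gt hnk1) hd0.ne', Real.log_mul (ne_of_gt hn0) hd0.ne',
      Real.log_mul (ne_of_gt hk0) hd0.ne', Real.log_mul (ne_of_gt hnmk) hd0.ne', hC]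
  field_simp
  ring
end

section
/- Let k be a positive integer and n > k a positive integer. The function f(n,k) = n(k+1)·ln n + k(n−1)·ln k − (nk−1)·ln(nk−1) − (n−k)·ln(n−k) is strictly positive. -/
/-- Positivity of the asymptotic exponential growth rate
`f(n,k) = n(k+1)·ln n + k(n−1)·ln k − (nk−1)·ln(nk−1) − (n−k)·ln(n−k)`. -/
theorem stmt6 (k n : ℕ) (hk : 1 ≤ k) (hkn : k < n) :
    0 < (n : ℝ) * ((k : ℝ) + 1) * Real.log (n : ℝ) +
          (k : ℝ) * ((n : ℝ) - 1) * Real.log (k : ℝ) -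
          ((n : ℝ) * (k : ℝ) - 1) * Real.log ((n : ℝ) * (k : ℝ) - 1) -
          ((n : ℝ) - (k : ℝ)) * Real.log ((n : ℝ) - (k : ℝ)) := by
  have hK : (1 : ℝ) ≤ (k : ℝ) := by exact_mod_cast hk
  have hNK : (k : ℝ) + 1 ≤ (n : ℝ) := by exact_mod_cast hkn
  have hN : (2 : ℝ) ≤ (n : ℝ) := by linarith
  have hposNK : (0 : ℝ) < (n : ℝ) * (k : ℝ) - 1 := by nlinarith
  have h1 : Real.log ((n : ℝ) * (k : ℝ) - 1) < Real.log (n : ℝ) + Real.log (k : ℝ) := by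
    rw [← Real.log_mul (by linarith) (by linarith)]
    exact Real.log_lt_log hposNK (by linarith)
  have h3 : Real.log ((n : ℝ) - (k : ℝ)) ≤ Real.log (n : ℝ) :=
    Real.log_le_log (by linarith) (by linarith)
  have h4 : Real.log (k : ℝ) ≤ Real.log (n : ℝ) :=
    Real.log_le_log (by linarith) (by linarith)
  have h5 : 0 < Real.log (n : ℝ) := Real.log_pos (by linarith)
  have A : ((n : ℝ) * (k : ℝ) - 1) * Real.log ((n : ℝ) * (k : ℝ) - 1) <
      ((n : ℝ) * (k : ℝ) - 1) * (Real.log (n : ℝ) + Real.log (k : ℝ)) :=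
    mul_lt_mul_of_pos_left h1 hposNK
  have B : ((n : ℝ) - (k : ℝ)) * Real.log ((n : ℝ) - (k : ℝ)) ≤
      ((n : ℝ) - (k : ℝ)) * Real.log (n : ℝ) :=
    mul_le_mul_of_nonneg_left h3 (by linarith)
  have C : ((k : ℝ) - 1) * Real.log (k : ℝ) ≤ ((k : ℝ) - 1) * Real.log (n : ℝ) :=
    mul_le_mul_of_nonneg_left h4 (by linarith)
  nlinarith [A, B, C, h5]
end

section
/- Let G be a finite (multi)graph with vertex set V, |V| = v. Consider the quiver Γ obtained by orienting the edges of G arbitrarily, and the dimension vector α with α_i = 1 for all vertices i. Then the number of spanning trees of G equals the number of equivalence classes of dimension vectors β on the universal abelian covering quiver Γ̂ that are compatible with α, have connected support, and take values in {0,1}, such that the support of β is a tree with v vertices. -/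
variable (Γ₀ Γ₁ : Type*) [Fintype Γ₀] [DecidableEq Γ₀] [Fintype Γ₁] [DecidableEq Γ₁]
  (s t : Γ₁ → Γ₀)

/-- Adjacency (in either direction) in the universal abelian covering quiver `Γ̂`:
for each arrow `a : i → j` of `Γ` and `χ ∈ ℤ^{Γ₁}` there is an arrow
`(i,χ) → (j, χ + e_a)`. -/
def coverAdj (p q : Γ₀ × (Γ₁ → ℤ)) : Prop :=
  ∃ (a : Γ₁) (χ : Γ₁ → ℤ),
    (p = (s a, χ) ∧ q = (t a, χ + Pi.single a 1)) ∨
    (q = (s a, χ) ∧ p = (t a, χ + Pi.single a 1))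

/-- A `{0,1}`-valued dimension vector of `Γ̂`, compatible with the all-ones dimension
vector of `Γ`, whose support is a connected tree with `|Γ₀|` vertices. -/
def GoodBeta (β : (Γ₀ × (Γ₁ → ℤ)) →₀ ℕ) : Prop :=
  (∀ p, β p ≤ 1) ∧
  (∀ i : Γ₀, (β.sum fun p n => if p.1 = i then n else 0) = 1) ∧
  β.support.card = Fintype.card Γ₀ ∧
  {pa : Γ₁ × (Γ₁ → ℤ) | (s pa.1, pa.2) ∈ β.support ∧
      (t pa.1, pa.2 + Pi.single pa.1 1) ∈ β.support}.ncard = Fintype.card Γ₀ - 1 ∧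
  ∀ p ∈ β.support, ∀ q ∈ β.support,
    Relation.EqvGen
      (fun x y => x ∈ β.support ∧ y ∈ β.support ∧ coverAdj Γ₀ Γ₁ s t x y) p q

/-- A spanning tree of the underlying (multi)graph of `Γ`: a set of `|Γ₀| - 1` edges
connecting all vertices. -/
def SpanningTree (E : Finset Γ₁) : Prop :=
  E.card = Fintype.card Γ₀ - 1 ∧
  ∀ i j : Γ₀, Relation.EqvGen (fun x y => ∃ a ∈ E, s a = x ∧ t a = y) i j

/-- Equivalence of dimension vectors of `Γ̂`: translation by `ξ ∈ ℤ^{Γ₁}`. -/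
def coverSetoid : Setoid {β : (Γ₀ × (Γ₁ → ℤ)) →₀ ℕ // GoodBeta Γ₀ Γ₁ s t β} where
  r β β' := ∃ ξ : Γ₁ → ℤ, ∀ p : Γ₀ × (Γ₁ → ℤ),
    (β' : (Γ₀ × (Γ₁ → ℤ)) →₀ ℕ) p = (β : (Γ₀ × (Γ₁ → ℤ)) →₀ ℕ) (p.1, p.2 + ξ)
  iseqv := by
    constructor
    · intro β; exact ⟨0, fun p => by simp⟩
    · rintro β β' ⟨ξ, h⟩
      exact ⟨-ξ, fun p => by rw [h (p.1, p.2 + -ξ)]; simp⟩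
    · rintro β β' β'' ⟨ξ, h⟩ ⟨ξ', h'⟩
      refine ⟨ξ + ξ', fun p => ?_⟩
      rw [h' p, h (p.1, p.2 + ξ')]
      have e : p.2 + ξ' + ξ = p.2 + (ξ + ξ') := by abel
      rw [e]

section AuxST

variable {Γ₀ Γ₁ : Type*} [Fintype Γ₀] [DecidableEq Γ₀] [Fintype Γ₁] [DecidableEq Γ₁]
  {s t : Γ₁ → Γ₀}

/-- Multigraph adjacency via an edge set. -/
def eRel (s t : Γ₁ → Γ₀) (E : Finset Γ₁) : Γ₀ → Γ₀ → Prop :=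
  fun x y => ∃ a ∈ E, s a = x ∧ t a = y

set_option linter.unusedSectionVars false in
lemma boundary {E : Finset Γ₁} {T : Finset Γ₀} {i j : Γ₀}
    (h : Relation.EqvGen (eRel s t E) i j) (hi : i ∈ T) (hj : j ∉ T) :
    ∃ a ∈ E, (s a ∈ T ∧ t a ∉ T) ∨ (s a ∉ T ∧ t a ∈ T) := by
  by_contra hc
  push_neg at hc
  have key : ∀ x y, Relation.EqvGen (eRel s t E) x y → (x ∈ T ↔ y ∈ T) := by
    intro x y h
    induction h with
    | rel x y hxy =>
      obtain ⟨a, ha, hsa, hta⟩ := hxy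
      obtain ⟨h1, h2⟩ := hc a ha
      subst hsa; subst hta
      constructor
      · exact h1
      · intro hy; by_contra hx; exact h2 hx hy
    | refl x => exact Iff.rfl
    | symm _ _ _ ih => exact ih.symm
    | trans _ _ _ _ _ ih1 ih2 => exact ih1.trans ih2
  exact hj ((key i j h).mp hi)

/-- Invariant for the greedy growth of a spanning tree potential. -/
def GrowInv (s t : Γ₁ → Γ₀) (E : Finset Γ₁) (T : Finset Γ₀) (S : Finset Γ₁)
    (f : Γ₀ → Γ₁ → ℤ) : Prop :=
  S ⊆ E ∧ S.card + 1 = T.card ∧ (∀ a ∈ S, s a ∈ T ∧ t a ∈ T) ∧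
  (∀ a ∈ S, f (t a) = f (s a) + Pi.single a 1) ∧
  (∀ a, a ∉ S → ∀ i, f i a = 0) ∧ Set.InjOn f T

set_option linter.unusedSectionVars false in
lemma grow (E : Finset Γ₁)
    (hconn : ∀ i j : Γ₀, Relation.EqvGen (eRel s t E) i j) :
    ∀ n (T : Finset Γ₀), Tᶜ.card ≤ n → (∃ S f, GrowInv s t E T S f) →
      ∃ S f, GrowInv s t E Finset.univ S f := by
  intro n
  induction n with
  | zero =>
    intro T hT hSf
    have hU : Tᶜ = ∅ := Finset.card_eq_zero.mp (Nat.le_zero.mp hT)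
    have hTu : T = Finset.univ := (Finset.compl_eq_empty_iff T).mp hU
    rwa [hTu] at hSf
  | succ m ih =>
    intro T hT hSf
    by_cases hTu : T = Finset.univ
    · rwa [hTu] at hSf
    · obtain ⟨S, f, hSE, hcards, hin, hpot, hzero, hinj⟩ := hSf
      have hTne : T.Nonempty := by
        rw [← Finset.card_pos, ← hcards]; omega
      obtain ⟨i, hi⟩ := hTne
      obtain ⟨j, hj⟩ : ∃ j, j ∉ T := by
        by_contra hc
        push_neg at hc
        exact hTu (Finset.eq_univ_iff_forall.mpr hc)
      obtain ⟨a, haE, hcase⟩ := boundary (hconn i j) hi hj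
      rcases hcase with ⟨hsa, hta⟩ | ⟨hsa, hta⟩
      · -- s a ∈ T, t a ∉ T : add vertex t a
        have haS : a ∉ S := fun h => hta (hin a h).2
        have hne : s a ≠ t a := fun h => hta (h ▸ hsa)
        set f' := Function.update f (t a) (f (s a) + Pi.single a 1) with hf'
        refine ih (insert (t a) T) ?_ ⟨insert a S, f', ?_, ?_, ?_, ?_, ?_, ?_⟩
        · have h1 : (insert (t a) T)ᶜ.card = Tᶜ.card - 1 := by
            rw [Finset.card_compl, Finset.card_compl,
              Finset.card_insert_of_notMem hta]
            omega
          have h2 : 0 < Tᶜ.card := by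
            rw [Finset.card_pos]; exact ⟨j, Finset.mem_compl.mpr hj⟩
          omega
        · exact Finset.insert_subset haE hSE
        · rw [Finset.card_insert_of_notMem haS, Finset.card_insert_of_notMem hta]
          omega
        · intro b hb
          rcases Finset.mem_insert.mp hb with rfl | hb
          · exact ⟨Finset.mem_insert_of_mem hsa, Finset.mem_insert_self _ _⟩
          · exact ⟨Finset.mem_insert_of_mem (hin b hb).1,
              Finset.mem_insert_of_mem (hin b hb).2⟩
        · intro b hb
          rcases Finset.mem_insert.mp hb with rfl | hb
          · rw [hf', Function.update_self, Function.update_of_ne hne]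
          · have hb1 : t b ≠ t a := fun h => hta (h ▸ (hin b hb).2)
            have hb2 : s b ≠ t a := fun h => hta (h ▸ (hin b hb).1)
            rw [hf', Function.update_of_ne hb1, Function.update_of_ne hb2]
            exact hpot b hb
        · intro b hb i'
          have hba : b ≠ a := fun h => hb (h ▸ Finset.mem_insert_self a S)
          have hbS : b ∉ S := fun h => hb (Finset.mem_insert_of_mem h)
          by_cases hi' : i' = t a
          · subst hi'
            rw [hf', Function.update_self, Pi.add_apply,
              Pi.single_eq_of_ne hba, hzero b hbS]
            ring
          · rw [hf', Function.update_of_ne hi']; exact hzero b hbS i'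
        · intro x hx y hy hxy
          simp only [Finset.coe_insert, Set.mem_insert_iff, Finset.mem_coe] at hx hy
          have hfa : ∀ z ∈ T, f' z a = 0 := by
            intro z hz
            have : z ≠ t a := fun h => hta (h ▸ hz)
            rw [hf', Function.update_of_ne this]; exact hzero a haS z
          have hta1 : f' (t a) a = 1 := by
            rw [hf', Function.update_self, Pi.add_apply, Pi.single_eq_same,
              hzero a haS (s a)]
            ring
          rcases hx with rfl | hx <;> rcases hy with rfl | hy
          · rfl
          · exfalso; rw [hxy] at hta1; rw [hfa y hy] at hta1; omega
          · exfalso; rw [← hxy] at hta1; rw [hfa x hx] at hta1; omega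
          · have hx' : x ≠ t a := fun h => hta (h ▸ hx)
            have hy' : y ≠ t a := fun h => hta (h ▸ hy)
            apply hinj hx hy
            rwa [hf', Function.update_of_ne hx', Function.update_of_ne hy'] at hxy
      · -- t a ∈ T, s a ∉ T : add vertex s a
        have haS : a ∉ S := fun h => hsa (hin a h).1
        have hne : s a ≠ t a := fun h => hsa (h ▸ hta)
        set f' := Function.update f (s a) (f (t a) - Pi.single a 1) with hf'
        refine ih (insert (s a) T) ?_ ⟨insert a S, f', ?_, ?_, ?_, ?_, ?_, ?_⟩
        · have h1 : (insert (s a) T)ᶜ.card = Tᶜ.card - 1 := by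
            rw [Finset.card_compl, Finset.card_compl,
              Finset.card_insert_of_notMem hsa]
            omega
          have h2 : 0 < Tᶜ.card := by
            rw [Finset.card_pos]; exact ⟨j, Finset.mem_compl.mpr hj⟩
          omega
        · exact Finset.insert_subset haE hSE
        · rw [Finset.card_insert_of_notMem haS, Finset.card_insert_of_notMem hsa]
          omega
        · intro b hb
          rcases Finset.mem_insert.mp hb with rfl | hb
          · exact ⟨Finset.mem_insert_self _ _, Finset.mem_insert_of_mem hta⟩
          · exact ⟨Finset.mem_insert_of_mem (hin b hb).1,
              Finset.mem_insert_of_mem (hin b hb).2⟩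
        · intro b hb
          rcases Finset.mem_insert.mp hb with rfl | hb
          · rw [hf', Function.update_of_ne hne.symm, Function.update_self]
            abel
          · have hb1 : t b ≠ s a := fun h => hsa (h ▸ (hin b hb).2)
            have hb2 : s b ≠ s a := fun h => hsa (h ▸ (hin b hb).1)
            rw [hf', Function.update_of_ne hb1, Function.update_of_ne hb2]
            exact hpot b hb
        · intro b hb i'
          have hba : b ≠ a := fun h => hb (h ▸ Finset.mem_insert_self a S)
          have hbS : b ∉ S := fun h => hb (Finset.mem_insert_of_mem h)
          by_cases hi' : i' = s a
          · subst hi'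
            rw [hf', Function.update_self, Pi.sub_apply,
              Pi.single_eq_of_ne hba, hzero b hbS]
            ring
          · rw [hf', Function.update_of_ne hi']; exact hzero b hbS i'
        · intro x hx y hy hxy
          simp only [Finset.coe_insert, Set.mem_insert_iff, Finset.mem_coe] at hx hy
          have hfa : ∀ z ∈ T, f' z a = 0 := by
            intro z hz
            have : z ≠ s a := fun h => hsa (h ▸ hz)
            rw [hf', Function.update_of_ne this]; exact hzero a haS z
          have hta1 : f' (s a) a = -1 := by
            rw [hf', Function.update_self, Pi.sub_apply, Pi.single_eq_same,
              hzero a haS (t a)]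
            ring
          rcases hx with rfl | hx <;> rcases hy with rfl | hy
          · rfl
          · exfalso; rw [hxy] at hta1; rw [hfa y hy] at hta1; omega
          · exfalso; rw [← hxy] at hta1; rw [hfa x hx] at hta1; omega
          · have hx' : x ≠ s a := fun h => hsa (h ▸ hx)
            have hy' : y ≠ s a := fun h => hsa (h ▸ hy)
            apply hinj hx hy
            rwa [hf', Function.update_of_ne hx', Function.update_of_ne hy'] at hxy

set_option linter.unusedSectionVars false in
lemma exists_potential (E : Finset Γ₁)
    (hconn : ∀ i j : Γ₀, Relation.EqvGen (eRel s t E) i j)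
    (hcard : E.card = Fintype.card Γ₀ - 1) :
    ∃ f : Γ₀ → Γ₁ → ℤ, Function.Injective f ∧
      ∀ a : Γ₁, a ∈ E ↔ f (t a) = f (s a) + Pi.single a 1 := by
  cases isEmpty_or_nonempty Γ₀ with
  | inl h =>
    have : IsEmpty Γ₁ := ⟨fun a => (h.false (s a))⟩
    exact ⟨fun _ _ => 0, fun x => isEmptyElim x, fun a => isEmptyElim a⟩
  | inr h =>
    obtain ⟨i₀⟩ := h
    have base : ∃ S f, GrowInv s t E {i₀} S f := by
      refine ⟨∅, fun _ _ => 0, by simp, by simp, by simp, by simp, by simp, ?_⟩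
      intro x hx y hy _
      simp only [Finset.coe_singleton, Set.mem_singleton_iff] at hx hy
      rw [hx, hy]
    obtain ⟨S, f, hSE, hcards, _, hpot, hzero, hinj⟩ :=
      grow E hconn ({i₀} : Finset Γ₀)ᶜ.card {i₀} le_rfl base
    have hScard : S.card = Fintype.card Γ₀ - 1 := by
      rw [Finset.card_univ] at hcards
      have : 1 ≤ Fintype.card Γ₀ := Fintype.card_pos_iff.mpr ⟨i₀⟩
      omega
    have hSeq : S = E := Finset.eq_of_subset_of_card_le hSE (by rw [hScard, hcard])
    subst hSeq
    refine ⟨f, fun x y hxy => hinj (Finset.mem_univ x) (Finset.mem_univ y) hxy, fun a => ?_⟩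
    constructor
    · exact hpot a
    · intro hEq
      by_contra haS
      have h1 : f (t a) a = 0 := hzero a haS (t a)
      have h2 : f (s a) a = 0 := hzero a haS (s a)
      have := congrFun hEq a
      rw [h1, Pi.add_apply, h2, Pi.single_eq_same] at this
      omega

set_option linter.unusedSectionVars false in
/-- uniqueness of potentials up to translation -/
lemma potential_unique {E : Finset Γ₁}
    (hconn : ∀ i j : Γ₀, Relation.EqvGen (eRel s t E) i j)
    {f g : Γ₀ → Γ₁ → ℤ} (hf : ∀ a ∈ E, f (t a) = f (s a) + Pi.single a 1)
    (hg : ∀ a ∈ E, g (t a) = g (s a) + Pi.single a 1) :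
    ∃ ξ : Γ₁ → ℤ, ∀ i, g i = f i + ξ := by
  cases isEmpty_or_nonempty Γ₀ with
  | inl h => exact ⟨0, fun i => isEmptyElim i⟩
  | inr h =>
    obtain ⟨i₀⟩ := h
    have key : ∀ x y, Relation.EqvGen (eRel s t E) x y →
        g x - f x = g y - f y := by
      intro x y hxy
      induction hxy with
      | rel x y hxy =>
        obtain ⟨a, ha, hsa, hta⟩ := hxy
        subst hsa; subst hta
        rw [hf a ha, hg a ha]; abel
      | refl x => rfl
      | symm _ _ _ ih => exact ih.symm
      | trans _ _ _ _ _ ih1 ih2 => exact ih1.trans ih2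
    refine ⟨g i₀ - f i₀, fun i => ?_⟩
    have := key i₀ i (hconn i₀ i)
    rw [this]; abel

/-- the beta attached to a function `f : Γ₀ → ℤ^{Γ₁}` -/
noncomputable def betaOf (f : Γ₀ → Γ₁ → ℤ) : (Γ₀ × (Γ₁ → ℤ)) →₀ ℕ :=
  Finsupp.indicator (Finset.univ.image fun i => (i, f i)) fun _ _ => 1

set_option linter.unusedSectionVars false in
lemma betaOf_apply (f : Γ₀ → Γ₁ → ℤ) (p : Γ₀ × (Γ₁ → ℤ)) :
    betaOf f p = if p.2 = f p.1 then 1 else 0 := by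
  classical
  rw [betaOf, Finsupp.indicator_apply]
  have : p ∈ Finset.univ.image (fun i => (i, f i)) ↔ p.2 = f p.1 := by
    simp only [Finset.mem_image, Finset.mem_univ, true_and]
    constructor
    · rintro ⟨i, hi⟩; rw [← hi]
    · intro h; exact ⟨p.1, by rw [← h]⟩
  split_ifs with h1 h2 h2
  · rfl
  · exact absurd (this.mp h1) h2
  · exact absurd (this.mpr h2) h1
  · rfl

set_option linter.unusedSectionVars false in
lemma betaOf_support (f : Γ₀ → Γ₁ → ℤ) (p : Γ₀ × (Γ₁ → ℤ)) :
    p ∈ (betaOf f).support ↔ p.2 = f p.1 := by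
  rw [Finsupp.mem_support_iff, betaOf_apply]
  split_ifs with h <;> simp [h]

set_option linter.unusedSectionVars false in
/-- extraction of the graph function from a good beta -/
lemma goodBeta_graph {β : (Γ₀ × (Γ₁ → ℤ)) →₀ ℕ} (hβ : GoodBeta Γ₀ Γ₁ s t β) :
    ∃ f : Γ₀ → Γ₁ → ℤ, ∀ p : Γ₀ × (Γ₁ → ℤ), p ∈ β.support ↔ p.2 = f p.1 := by
  classical
  obtain ⟨h1, h2, h3, h4, h5⟩ := hβ
  have hval : ∀ p ∈ β.support, β p = 1 := by
    intro p hp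
    have := Finsupp.mem_support_iff.mp hp
    have := h1 p
    omega
  have hcard : ∀ i : Γ₀, (β.support.filter fun p => p.1 = i).card = 1 := by
    intro i
    have h2i := h2 i
    rw [Finsupp.sum] at h2i
    have e : (∑ a ∈ β.support, if a.1 = i then β a else 0) =
        (β.support.filter fun p => p.1 = i).card := by
      rw [Finset.card_filter]
      apply Finset.sum_congr rfl
      intro p hp
      by_cases h : p.1 = i <;> simp [h, hval p hp]
    rw [← e, h2i]
  have hex : ∀ i : Γ₀, ∃ x, β.support.filter (fun p => p.1 = i) = {x} :=
    fun i => Finset.card_eq_one.mp (hcard i)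
  choose g hg using hex
  have hg1 : ∀ i, (g i).1 = i := by
    intro i
    have : g i ∈ β.support.filter (fun p => p.1 = i) := by
      rw [hg i]; exact Finset.mem_singleton_self _
    exact (Finset.mem_filter.mp this).2
  have hg2 : ∀ i, g i ∈ β.support := by
    intro i
    have : g i ∈ β.support.filter (fun p => p.1 = i) := by
      rw [hg i]; exact Finset.mem_singleton_self _
    exact (Finset.mem_filter.mp this).1
  refine ⟨fun i => (g i).2, fun p => ?_⟩
  constructor
  · intro hp
    have : p ∈ β.support.filter (fun q => q.1 = p.1) :=
      Finset.mem_filter.mpr ⟨hp, rfl⟩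
    rw [hg p.1] at this
    exact congrArg Prod.snd (Finset.mem_singleton.mp this)
  · intro hp
    have : p = g p.1 := Prod.ext (hg1 p.1).symm hp
    rw [this]; exact hg2 p.1

set_option linter.unusedSectionVars false in
lemma goodBeta_apply {β : (Γ₀ × (Γ₁ → ℤ)) →₀ ℕ} (hβ : GoodBeta Γ₀ Γ₁ s t β)
    {f : Γ₀ → Γ₁ → ℤ} (hf : ∀ p : Γ₀ × (Γ₁ → ℤ), p ∈ β.support ↔ p.2 = f p.1)
    (p : Γ₀ × (Γ₁ → ℤ)) : β p = if p.2 = f p.1 then 1 else 0 := by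
  by_cases h : p.2 = f p.1
  · rw [if_pos h]
    have h1 := Finsupp.mem_support_iff.mp ((hf p).mpr h)
    have h2 := hβ.1 p
    omega
  · rw [if_neg h]
    exact Finsupp.notMem_support_iff.mp (fun hm => h ((hf p).mp hm))

/-- The edge set of the projection of the support of `β`. -/
noncomputable def treeEdges (s t : Γ₁ → Γ₀) (β : (Γ₀ × (Γ₁ → ℤ)) →₀ ℕ) : Finset Γ₁ := by
  classical
  exact Finset.univ.filter fun a => ∃ χ : Γ₁ → ℤ,
    (s a, χ) ∈ β.support ∧ (t a, χ + Pi.single a 1) ∈ β.support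

set_option linter.unusedSectionVars false in
lemma mem_treeEdges {β : (Γ₀ × (Γ₁ → ℤ)) →₀ ℕ} {a : Γ₁} :
    a ∈ treeEdges s t β ↔ ∃ χ : Γ₁ → ℤ,
      (s a, χ) ∈ β.support ∧ (t a, χ + Pi.single a 1) ∈ β.support := by
  rw [treeEdges]
  simp

set_option linter.unusedSectionVars false in
lemma treeEdges_translate {β β' : (Γ₀ × (Γ₁ → ℤ)) →₀ ℕ} (ξ : Γ₁ → ℤ)
    (h : ∀ p : Γ₀ × (Γ₁ → ℤ), β' p = β (p.1, p.2 + ξ)) :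
    treeEdges s t β' = treeEdges s t β := by
  have hs : ∀ p : Γ₀ × (Γ₁ → ℤ), p ∈ β'.support ↔ (p.1, p.2 + ξ) ∈ β.support := by
    intro p
    rw [Finsupp.mem_support_iff, Finsupp.mem_support_iff, h p]
  ext a
  rw [mem_treeEdges, mem_treeEdges]
  constructor
  · rintro ⟨χ, h1, h2⟩
    refine ⟨χ + ξ, (hs _).mp h1, ?_⟩
    have h2' := (hs _).mp h2
    have e : χ + Pi.single a 1 + ξ = χ + ξ + Pi.single a 1 := by abel
    rwa [e] at h2'
  · rintro ⟨χ, h1, h2⟩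
    refine ⟨χ - ξ, (hs _).mpr ?_, (hs _).mpr ?_⟩
    · have e : χ - ξ + ξ = χ := by abel
      rw [e]; exact h1
    · have e : χ - ξ + Pi.single a 1 + ξ = χ + Pi.single a 1 := by abel
      rw [e]; exact h2

set_option linter.unusedSectionVars false in
lemma goodBeta_spanningTree {β : (Γ₀ × (Γ₁ → ℤ)) →₀ ℕ} (hβ : GoodBeta Γ₀ Γ₁ s t β)
    {f : Γ₀ → Γ₁ → ℤ} (hf : ∀ p : Γ₀ × (Γ₁ → ℤ), p ∈ β.support ↔ p.2 = f p.1) :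
    SpanningTree Γ₀ Γ₁ s t (treeEdges s t β) := by
  obtain ⟨h1, h2, h3, h4, h5⟩ := hβ
  constructor
  · -- cardinality
    have hset : {pa : Γ₁ × (Γ₁ → ℤ) | (s pa.1, pa.2) ∈ β.support ∧
        (t pa.1, pa.2 + Pi.single pa.1 1) ∈ β.support}
        = (fun a => (a, f (s a))) '' (treeEdges s t β : Set Γ₁) := by
      ext pa
      simp only [Set.mem_setOf_eq, Set.mem_image, Finset.mem_coe]
      constructor
      · rintro ⟨hs', ht'⟩
        have hχ : pa.2 = f (s pa.1) := (hf _).mp hs'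
        exact ⟨pa.1, mem_treeEdges.mpr ⟨pa.2, hs', ht'⟩, by rw [← hχ]⟩
      · rintro ⟨a, ha, rfl⟩
        obtain ⟨χ, hs', ht'⟩ := mem_treeEdges.mp ha
        have hχ : χ = f (s a) := (hf _).mp hs'
        rw [hχ] at hs' ht'
        exact ⟨hs', ht'⟩
    rw [hset, Set.ncard_image_of_injective _
      (fun a b hab => congrArg Prod.fst hab), Set.ncard_coe_finset] at h4
    exact h4
  · intro i j
    have hij := h5 (i, f i) ((hf _).mpr rfl) (j, f j) ((hf _).mpr rfl)
    have proj : ∀ p q : Γ₀ × (Γ₁ → ℤ),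
        Relation.EqvGen
          (fun x y => x ∈ β.support ∧ y ∈ β.support ∧ coverAdj Γ₀ Γ₁ s t x y) p q →
        Relation.EqvGen (fun x y => ∃ a ∈ treeEdges s t β, s a = x ∧ t a = y) p.1 q.1 := by
      intro p q h
      induction h with
      | rel x y hxy =>
        obtain ⟨hx, hy, a, χ, hcase⟩ := hxy
        rcases hcase with ⟨rfl, rfl⟩ | ⟨rfl, rfl⟩
        · exact Relation.EqvGen.rel _ _ ⟨a, mem_treeEdges.mpr ⟨χ, hx, hy⟩, rfl, rfl⟩
        · exact Relation.EqvGen.symm _ _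
            (Relation.EqvGen.rel _ _ ⟨a, mem_treeEdges.mpr ⟨χ, hy, hx⟩, rfl, rfl⟩)
      | refl x => exact Relation.EqvGen.refl _
      | symm _ _ _ ih => exact Relation.EqvGen.symm _ _ ih
      | trans _ _ _ _ _ ih1 ih2 => exact Relation.EqvGen.trans _ _ _ ih1 ih2
    exact proj _ _ hij

set_option linter.unusedSectionVars false in
lemma goodBeta_betaOf {E : Finset Γ₁}
    (hconn : ∀ i j : Γ₀, Relation.EqvGen (eRel s t E) i j)
    (hcard : E.card = Fintype.card Γ₀ - 1) {f : Γ₀ → Γ₁ → ℤ}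
    (hinj : Function.Injective f)
    (hE : ∀ a : Γ₁, a ∈ E ↔ f (t a) = f (s a) + Pi.single a 1) :
    GoodBeta Γ₀ Γ₁ s t (betaOf f) ∧ treeEdges s t (betaOf f) = E := by
  classical
  have hgraphinj : Function.Injective (fun i : Γ₀ => (i, f i)) :=
    fun a b hab => congrArg Prod.fst hab
  have hsupp : (betaOf f).support = Finset.univ.image (fun i => (i, f i)) := by
    ext p
    rw [betaOf_support, Finset.mem_image]
    simp only [Finset.mem_univ, true_and]
    constructor
    · intro h; exact ⟨p.1, by rw [← h]⟩
    · rintro ⟨i, hi⟩; rw [← hi]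
  have hteq : treeEdges s t (betaOf f) = E := by
    ext a
    rw [mem_treeEdges]
    constructor
    · rintro ⟨χ, h1, h2⟩
      rw [betaOf_support] at h1 h2
      have h1' : χ = f (s a) := h1
      have h2' : χ + Pi.single a 1 = f (t a) := h2
      rw [hE a, ← h2', h1']
    · intro ha
      refine ⟨f (s a), (betaOf_support f _).mpr rfl, (betaOf_support f _).mpr ?_⟩
      exact ((hE a).mp ha).symm
  refine ⟨⟨?_, ?_, ?_, ?_, ?_⟩, hteq⟩
  · intro p
    rw [betaOf_apply]
    split_ifs <;> omega
  · intro i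
    rw [Finsupp.sum, hsupp, Finset.sum_image (fun x _ y _ h => hgraphinj h)]
    have : ∀ i' : Γ₀, (if ((i' : Γ₀), f i').1 = i then betaOf f (i', f i') else 0)
        = if i' = i then 1 else 0 := by
      intro i'
      by_cases h : i' = i <;> simp [h, betaOf_apply]
    rw [Finset.sum_congr rfl fun i' _ => this i']
    simp
  · rw [hsupp, Finset.card_image_of_injective _ hgraphinj, Finset.card_univ]
  · have hset : {pa : Γ₁ × (Γ₁ → ℤ) | (s pa.1, pa.2) ∈ (betaOf f).support ∧
        (t pa.1, pa.2 + Pi.single pa.1 1) ∈ (betaOf f).support}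
        = (fun a => (a, f (s a))) '' (E : Set Γ₁) := by
      ext pa
      simp only [Set.mem_setOf_eq, Set.mem_image, Finset.mem_coe, betaOf_support]
      constructor
      · rintro ⟨h1, h2⟩
        refine ⟨pa.1, ?_, by rw [← h1]⟩
        rw [hE pa.1, ← h2, h1]
      · rintro ⟨a, ha, rfl⟩
        exact ⟨rfl, ((hE a).mp ha).symm⟩
    rw [hset, Set.ncard_image_of_injective _
      (fun a b hab => congrArg Prod.fst hab), Set.ncard_coe_finset]
    exact hcard
  · intro p hp q hq
    have hp2 : p = (p.1, f p.1) := Prod.ext rfl ((betaOf_support f p).mp hp)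
    have hq2 : q = (q.1, f q.1) := Prod.ext rfl ((betaOf_support f q).mp hq)
    have lift : ∀ i j : Γ₀, Relation.EqvGen (eRel s t E) i j →
        Relation.EqvGen
          (fun x y => x ∈ (betaOf f).support ∧ y ∈ (betaOf f).support ∧
            coverAdj Γ₀ Γ₁ s t x y) (i, f i) (j, f j) := by
      intro i j h
      induction h with
      | rel x y hxy =>
        obtain ⟨a, ha, rfl, rfl⟩ := hxy
        apply Relation.EqvGen.rel
        refine ⟨(betaOf_support f _).mpr rfl, (betaOf_support f _).mpr rfl,
          a, f (s a), Or.inl ⟨rfl, ?_⟩⟩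
        exact Prod.ext rfl ((hE a).mp ha)
      | refl x => exact Relation.EqvGen.refl _
      | symm _ _ _ ih => exact Relation.EqvGen.symm _ _ ih
      | trans _ _ _ _ _ ih1 ih2 => exact Relation.EqvGen.trans _ _ _ ih1 ih2
    rw [hp2, hq2]
    exact lift _ _ (hconn _ _)

set_option linter.unusedSectionVars false in
lemma rel_of_treeEdges_eq {β β' : (Γ₀ × (Γ₁ → ℤ)) →₀ ℕ}
    (hβ : GoodBeta Γ₀ Γ₁ s t β) (hβ' : GoodBeta Γ₀ Γ₁ s t β')
    (hEE : treeEdges s t β = treeEdges s t β') :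
    ∃ ξ : Γ₁ → ℤ, ∀ p : Γ₀ × (Γ₁ → ℤ), β' p = β (p.1, p.2 + ξ) := by
  obtain ⟨f, hf⟩ := goodBeta_graph hβ
  obtain ⟨g, hg⟩ := goodBeta_graph hβ'
  have hconn : ∀ i j : Γ₀, Relation.EqvGen (eRel s t (treeEdges s t β)) i j :=
    (goodBeta_spanningTree hβ hf).2
  have hpotf : ∀ a ∈ treeEdges s t β, f (t a) = f (s a) + Pi.single a 1 := by
    intro a ha
    obtain ⟨χ, h1, h2⟩ := mem_treeEdges.mp ha
    have e1 : χ = f (s a) := (hf _).mp h1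
    have e2 : χ + Pi.single a 1 = f (t a) := (hf _).mp h2
    rw [← e2, e1]
  have hpotg : ∀ a ∈ treeEdges s t β, g (t a) = g (s a) + Pi.single a 1 := by
    intro a ha
    rw [hEE] at ha
    obtain ⟨χ, h1, h2⟩ := mem_treeEdges.mp ha
    have e1 : χ = g (s a) := (hg _).mp h1
    have e2 : χ + Pi.single a 1 = g (t a) := (hg _).mp h2
    rw [← e2, e1]
  obtain ⟨ξ, hξ⟩ := potential_unique hconn hpotf hpotg
  refine ⟨-ξ, fun p => ?_⟩
  rw [goodBeta_apply hβ' hg p, goodBeta_apply hβ hf (p.1, p.2 + -ξ)]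
  have hiff : ((p.1, p.2 + -ξ) : Γ₀ × (Γ₁ → ℤ)).2 = f (p.1, p.2 + -ξ).1 ↔
      p.2 = g p.1 := by
    simp only
    rw [hξ p.1]
    constructor
    · intro h; rw [← h]; abel
    · intro h; rw [h]; abel
  by_cases h : p.2 = g p.1
  · rw [if_pos h, if_pos (hiff.mpr h)]
  · rw [if_neg h, if_neg (fun hc => h (hiff.mp hc))]

end AuxST

/-- The number of spanning trees of the underlying graph equals the number of
equivalence classes of `{0,1}`-valued dimension vectors on the universal abelian
covering quiver compatible with the all-ones dimension vector whose support is a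
tree with `|Γ₀|` vertices. -/
theorem stmt9 :
    Nonempty ({E : Finset Γ₁ // SpanningTree Γ₀ Γ₁ s t E} ≃
      Quotient (coverSetoid Γ₀ Γ₁ s t)) := by
  classical
  have fwd : ∀ E : Finset Γ₁, SpanningTree Γ₀ Γ₁ s t E →
      ∃ β : (Γ₀ × (Γ₁ → ℤ)) →₀ ℕ, GoodBeta Γ₀ Γ₁ s t β ∧ treeEdges s t β = E := by
    rintro E ⟨hcard, hconn⟩
    obtain ⟨f, hinj, hE⟩ := exists_potential (s := s) (t := t) E hconn hcard
    obtain ⟨hgood, hte⟩ := goodBeta_betaOf hconn hcard hinj hE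
    exact ⟨betaOf f, hgood, hte⟩
  choose F hF1 hF2 using fwd
  have bwd : ∀ β : {β : (Γ₀ × (Γ₁ → ℤ)) →₀ ℕ // GoodBeta Γ₀ Γ₁ s t β},
      SpanningTree Γ₀ Γ₁ s t (treeEdges s t β.1) := by
    rintro ⟨β, hβ⟩
    obtain ⟨f, hf⟩ := goodBeta_graph hβ
    exact goodBeta_spanningTree hβ hf
  have Gwd : ∀ β β' : {β : (Γ₀ × (Γ₁ → ℤ)) →₀ ℕ // GoodBeta Γ₀ Γ₁ s t β},
      (coverSetoid Γ₀ Γ₁ s t).r β β' →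
      (⟨treeEdges s t β.1, bwd β⟩ : {E : Finset Γ₁ // SpanningTree Γ₀ Γ₁ s t E})
        = ⟨treeEdges s t β'.1, bwd β'⟩ := by
    rintro β β' ⟨ξ, hξ⟩
    exact Subtype.ext (treeEdges_translate ξ hξ).symm
  refine ⟨⟨fun E => Quotient.mk (coverSetoid Γ₀ Γ₁ s t) ⟨F E.1 E.2, hF1 E.1 E.2⟩,
    Quotient.lift (fun β => ⟨treeEdges s t β.1, bwd β⟩) Gwd, ?_, ?_⟩⟩
  · rintro ⟨E, hE⟩
    exact Subtype.ext (hF2 E hE)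
  · refine fun q => Quotient.inductionOn q ?_
    rintro ⟨β, hβ⟩
    apply Quotient.sound
    have hsp := bwd ⟨β, hβ⟩
    obtain ⟨ξ, hξ⟩ := rel_of_treeEdges_eq
      (hF1 (treeEdges s t β) hsp) hβ
      (by rw [hF2 (treeEdges s t β) hsp])
    exact ⟨ξ, hξ⟩
end
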